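/- arXiv:math/0301115 — 2 statements merged into one kernel-verified Lean document; each statement's English description precedes it below -/
import Mathlib

section
/- Let q > 1 be a real number and z a complex number with |z| = 1 and z ≠ 1. Then |(1 - q^{-1}z)/(1 - z)|² · Σ_{m=0}^{∞} q^{-m}(1 - q^{-1}) |1 - z^{m+1}|² = 1 + q^{-1}. -/
/-- Series identity computing the norm of the spherical vector for a
tempered unramified principal series (Proposition 8.1). -/
theorem spherical_norm_series_tempered (q : ℝ) (hq : 1 < q) (z : ℂ)
    (hz : ‖z‖ = 1) (hz1 : z ≠ 1) :
    ‖(1 - (q : ℂ)⁻¹ * z) / (1 - z)‖ ^ 2 *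
      ∑' m : ℕ, q⁻¹ ^ m * (1 - q⁻¹) * ‖1 - z ^ (m + 1)‖ ^ 2 =
      1 + q⁻¹ := by
  set t : ℝ := q⁻¹ with ht
  have hq0 : (0:ℝ) < q := lt_trans one_pos hq
  have ht0 : 0 < t := inv_pos.2 hq0
  have ht1 : t < 1 := inv_lt_one_of_one_lt₀ hq
  have htc : ((q:ℂ))⁻¹ = (t:ℂ) := by rw [ht]; push_cast; ring
  -- norm of t*z
  have habs_tz : ‖(t:ℂ) * z‖ = t := by
    rw [norm_mul, hz, Complex.norm_of_nonneg ht0.le, mul_one]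
  have hnorm : ‖(t:ℂ) * z‖ < 1 := by rw [habs_tz]; exact ht1
  have hsum : Summable (fun m : ℕ => ((t:ℂ) * z) ^ m) := summable_geometric_of_norm_lt_one hnorm
  have hsum2 : Summable (fun m : ℕ => ((t:ℂ) * z) ^ m * z) := hsum.mul_right z
  have htsum2 : ∑' m : ℕ, ((t:ℂ) * z) ^ m * z = (1 - (t:ℂ) * z)⁻¹ * z := by
    rw [tsum_mul_right, tsum_geometric_of_norm_lt_one hnorm]
  -- real part series
  have hsumre : Summable (fun m : ℕ => (((t:ℂ) * z) ^ m * z).re) := by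
    have := Complex.hasSum_re hsum2.hasSum
    exact this.summable
  have hre_eq : ∀ m : ℕ, (((t:ℂ) * z) ^ m * z).re = t ^ m * (z ^ (m+1)).re := by
    intro m
    have : ((t:ℂ) * z) ^ m * z = ((t ^ m : ℝ) : ℂ) * z ^ (m+1) := by
      push_cast; ring
    rw [this, Complex.re_ofReal_mul]
  have hretsum : ∑' m : ℕ, t ^ m * (z ^ (m+1)).re = ((1 - (t:ℂ) * z)⁻¹ * z).re := by
    simp_rw [← hre_eq]
    rw [← Complex.re_tsum hsum2, htsum2]
  -- each term rewrite
  have hterm : ∀ m : ℕ, t ^ m * (1 - t) * ‖1 - z ^ (m + 1)‖ ^ 2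
      = 2 * (1 - t) * t ^ m - 2 * (1 - t) * (t ^ m * (z ^ (m+1)).re) := by
    intro m
    have habs : ‖z ^ (m+1)‖ = 1 := by rw [norm_pow, hz, one_pow]
    have hns : Complex.normSq (z ^ (m+1)) = 1 := by
      rw [← Complex.sq_norm, habs, one_pow]
    rw [Complex.sq_norm, Complex.normSq_sub]
    simp only [Complex.normSq_one, hns, one_mul]
    have : ((starRingEnd ℂ) (z ^ (m+1))).re = (z ^ (m+1)).re := Complex.conj_re _
    rw [this]
    ring
  -- summabilities over ℝ
  have hA : Summable (fun m : ℕ => t ^ m) := summable_geometric_of_lt_one ht0.le ht1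
  have hsumre' : Summable (fun m : ℕ => t ^ m * (z ^ (m+1)).re) := by
    have := hsumre
    simp only [hre_eq] at this
    exact this
  -- compute the tsum
  have hts : ∑' m : ℕ, t ^ m * (1 - t) * ‖1 - z ^ (m + 1)‖ ^ 2
      = 2 * (1 - t) * (1 - t)⁻¹ - 2 * (1 - t) * ((1 - (t:ℂ) * z)⁻¹ * z).re := by
    rw [tsum_congr hterm, Summable.tsum_sub (hA.mul_left _) (hsumre'.mul_left _),
      tsum_mul_left, tsum_mul_left, tsum_geometric_of_lt_one ht0.le ht1, hretsum]
  rw [htc, hts]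
  have ht1' : (1:ℝ) - t ≠ 0 := by linarith
  have h2 : 2 * (1 - t) * (1 - t)⁻¹ = 2 := by field_simp
  rw [h2]
  -- now pure algebra with real and imaginary parts
  have hz0 : (1:ℂ) - z ≠ 0 := sub_ne_zero.mpr fun h => hz1 h.symm
  have htz0 : (1:ℂ) - (t:ℂ) * z ≠ 0 := by
    intro h
    have : ((t:ℂ) * z) = 1 := by linear_combination -h
    have := congrArg (‖·‖) this
    rw [habs_tz, norm_one] at this
    linarith
  have hN1 : Complex.normSq (1 - (t:ℂ) * z) ≠ 0 := (Complex.normSq_pos.mpr htz0).ne'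
  have hN2 : Complex.normSq (1 - z) ≠ 0 := (Complex.normSq_pos.mpr hz0).ne'
  have hab : z.re ^ 2 + z.im ^ 2 = 1 := by
    have : Complex.normSq z = 1 := by rw [← Complex.sq_norm, hz, one_pow]
    rw [Complex.normSq_apply] at this
    nlinarith [this]
  have e1 : Complex.normSq (1 - (t:ℂ) * z) = (1 - t*z.re)^2 + (t*z.im)^2 := by
    simp [Complex.normSq_apply, Complex.sub_re, Complex.sub_im, Complex.mul_re, Complex.mul_im]
    ring
  have e2 : Complex.normSq (1 - z) = (1 - z.re)^2 + z.im^2 := by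
    simp [Complex.normSq_apply, Complex.sub_re, Complex.sub_im]
    ring
  have hab : z.re ^ 2 + z.im ^ 2 = 1 := by
    have h := Complex.sq_norm z
    rw [hz, Complex.normSq_apply] at h
    nlinarith [h]
  have e3 : ((1 - (t:ℂ) * z)⁻¹ * z).re = (z.re - t) / Complex.normSq (1 - (t:ℂ) * z) := by
    rw [inv_mul_eq_div, Complex.div_re, ← add_div]
    congr 1
    simp only [Complex.sub_re, Complex.sub_im, Complex.mul_re, Complex.mul_im,
      Complex.one_re, Complex.one_im, Complex.ofReal_re, Complex.ofReal_im]
    nlinarith [hab]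
  have hN1 : ((1 - t*z.re)^2 + (t*z.im)^2) ≠ 0 := by
    rw [← e1]; exact (Complex.normSq_pos.mpr htz0).ne'
  have hN2 : ((1 - z.re)^2 + z.im^2) ≠ 0 := by
    rw [← e2]; exact (Complex.normSq_pos.mpr hz0).ne'
  rw [Complex.sq_norm, Complex.normSq_div, e3, e1, e2]
  set a := z.re
  set b := z.im
  have hb : b ^ 2 = 1 - a ^ 2 := by linarith
  rw [show (t*b)^2 = t^2 * b^2 from by ring] at hN1 ⊢
  rw [hb] at hN1 hN2 ⊢
  field_simp
  ring
end

section
/- Let p be an odd prime, ψ the standard additive character of ℚ_p of order 0, τ ∈ ℤ_p^*, and z ∈ ℚ_p, a ∈ ℚ_p, x ∈ ℤ_p. Then ∫_{ℚ_p} ∫_{ℚ_p} char(z + pℤ_p)(u) · ψ(τ(x y² p² + 2uy − 2ay)) du dy = char(z + pℤ_p)(a), where char(z + pℤ_p) is the indicator function of the coset z + pℤ_p and the Haar measure gives ℤ_p volume 1. -/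
open MeasureTheory

variable {p : ℕ} [Fact p.Prime]

noncomputable instance : MeasurableSpace ℚ_[p] := borel _
instance : BorelSpace ℚ_[p] := ⟨rfl⟩

open scoped ENNReal


lemma exists_rat_approx (x : ℚ_[p]) :
    ∃ (m : ℤ) (n : ℕ), ‖x - ((m / p ^ n : ℚ) : ℚ_[p])‖ ≤ 1 := by
  have hp1 : (1:ℝ) < p := by exact_mod_cast (Fact.out : p.Prime).one_lt
  obtain ⟨n, hn⟩ := pow_unbounded_of_one_lt ‖x‖ hp1
  have hy : ‖x * (p:ℚ_[p]) ^ n‖ ≤ 1 := by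
    rw [norm_mul, Padic.norm_p_pow]
    calc ‖x‖ * (p:ℝ) ^ (-n:ℤ) ≤ (p:ℝ)^n * (p:ℝ)^(-n:ℤ) := by
          apply mul_le_mul_of_nonneg_right hn.le (by positivity)
      _ = 1 := by rw [← zpow_natCast (p:ℝ), ← zpow_add₀ (by positivity)]; simp
  set y : ℤ_[p] := ⟨x * (p:ℚ_[p]) ^ n, hy⟩ with hy_def
  refine ⟨(y.appr n : ℤ), n, ?_⟩
  have hs := PadicInt.appr_spec n y
  rw [← PadicInt.norm_le_pow_iff_mem_span_pow] at hs
  have hq : ((((y.appr n : ℤ) / p ^ n : ℚ)) : ℚ_[p]) = (y.appr n : ℚ_[p]) / (p:ℚ_[p])^n := by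
    push_cast; ring
  rw [hq]
  have hne : ((p:ℚ_[p])^n) ≠ 0 := by
    apply pow_ne_zero; exact_mod_cast (Fact.out : p.Prime).ne_zero
  have : x - (y.appr n : ℚ_[p]) / (p:ℚ_[p])^n = ((y - y.appr n : ℤ_[p]) : ℚ_[p]) / (p:ℚ_[p])^n := by
    field_simp
    exact rfl
  rw [this, norm_div, Padic.norm_p_pow]
  rw [PadicInt.norm_def] at hs
  have hpos : (0:ℝ) < (p:ℝ)^(-n:ℤ) := by positivity
  rw [div_le_one hpos]
  exact hs

section Psi
variable (ψ : ℚ_[p] → ℂ)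
  (hψ : ∀ (x : ℚ_[p]) (r : ℚ), (∃ (m : ℤ) (n : ℕ), r = m / p ^ n) →
      ‖x - (r : ℚ_[p])‖ ≤ 1 → ψ x = Complex.exp (-(2 * Real.pi * Complex.I * r)))
include hψ

lemma psi_one (x : ℚ_[p]) (h : ‖x‖ ≤ 1) : ψ x = 1 := by
  have := hψ x 0 ⟨0, 0, by norm_num⟩ (by simpa using h)
  simpa using this

lemma psi_add (x y : ℚ_[p]) : ψ (x + y) = ψ x * ψ y := by
  obtain ⟨mx, nx, hx⟩ := exists_rat_approx x
  obtain ⟨my, ny, hy⟩ := exists_rat_approx y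
  have hp0 : (p:ℚ) ≠ 0 := by exact_mod_cast (Fact.out : p.Prime).ne_zero
  have hxy : ((mx:ℚ) / p ^ nx) + ((my:ℚ) / p ^ ny)
      = ((mx * p ^ ny + my * p ^ nx : ℤ) : ℚ) / p ^ (nx + ny) := by
    push_cast
    field_simp
    try ring
    try tauto
  have hb : ‖x + y - ((((mx:ℚ) / p ^ nx) + ((my:ℚ) / p ^ ny) : ℚ) : ℚ_[p])‖ ≤ 1 := by
    have : ((((mx:ℚ) / p ^ nx) + ((my:ℚ) / p ^ ny) : ℚ) : ℚ_[p])
        = (((mx:ℚ) / p ^ nx : ℚ) : ℚ_[p]) + (((my:ℚ) / p ^ ny : ℚ) : ℚ_[p]) := by push_cast; ring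
    rw [this]
    have h2 : x + y - ((((mx:ℚ) / p ^ nx : ℚ) : ℚ_[p]) + (((my:ℚ) / p ^ ny : ℚ) : ℚ_[p]))
        = (x - (((mx:ℚ) / p ^ nx : ℚ) : ℚ_[p])) + (y - (((my:ℚ) / p ^ ny : ℚ) : ℚ_[p])) := by ring
    rw [h2]
    exact (Padic.nonarchimedean _ _).trans (max_le hx hy)
  have e1 := hψ x _ ⟨mx, nx, rfl⟩ hx
  have e2 := hψ y _ ⟨my, ny, rfl⟩ hy
  have e3 := hψ (x + y) _ ⟨mx * p ^ ny + my * p ^ nx, nx + ny, rfl⟩ (by rw [← hxy]; exact hb)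
  rw [e1, e2, e3, ← Complex.exp_add]
  congr 1
  rw [← hxy]
  push_cast
  ring

lemma psi_pinv_ne_one : ψ ((p:ℚ_[p])⁻¹) ≠ 1 := by
  have hp : p.Prime := Fact.out
  have hcast : (((1 / p : ℚ)) : ℚ_[p]) = (p:ℚ_[p])⁻¹ := by
    push_cast; ring
  have h := hψ ((p:ℚ_[p])⁻¹) (1/p) ⟨1, 1, by norm_num⟩ (by rw [hcast]; simp)
  rw [h]
  intro hc
  rw [Complex.exp_eq_one_iff] at hc
  obtain ⟨k, hk⟩ := hc
  have h2pi : (2 * Real.pi * Complex.I : ℂ) ≠ 0 := by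
    simp [Complex.I_ne_zero, Real.pi_ne_zero]
  have hpC : (p:ℂ) ≠ 0 := by exact_mod_cast hp.ne_zero
  have h1 : ((k * p : ℤ) : ℂ) * (2 * Real.pi * Complex.I) = (-1) * (2 * Real.pi * Complex.I) := by
    push_cast
    push_cast at hk
    field_simp at hk
    linear_combination -(2 * Real.pi * Complex.I) * hk
  have h2 : ((k * p : ℤ) : ℂ) = -1 := mul_right_cancel₀ h2pi h1
  have h3 : (k * p : ℤ) = -1 := by exact_mod_cast h2
  have h4 : (p:ℤ) ∣ 1 := ⟨-k, by linarith⟩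
  have h5 : (p:ℤ) ≤ 1 := Int.le_of_dvd one_pos h4
  have := hp.two_le
  omega

end Psi

lemma meas_ball (c : ℚ_[p]) (r : ℝ) : MeasurableSet {w : ℚ_[p] | ‖w - c‖ ≤ r} :=
  (isClosed_le (continuous_norm.comp (continuous_id.sub continuous_const)) continuous_const).measurableSet

lemma measure_shift (μ : Measure ℚ_[p])
    (hinv : ∀ (a : ℚ_[p]) (s : Set ℚ_[p]), μ ((a + ·) ⁻¹' s) = μ s)
    (c : ℚ_[p]) (r : ℝ) : μ {w : ℚ_[p] | ‖w - c‖ ≤ r} = μ {w : ℚ_[p] | ‖w‖ ≤ r} := by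
  have h := hinv (-c) {w : ℚ_[p] | ‖w‖ ≤ r}
  have he : ((-c) + ·) ⁻¹' {w : ℚ_[p] | ‖w‖ ≤ r} = {w : ℚ_[p] | ‖w - c‖ ≤ r} := by
    ext w; simp [neg_add_eq_sub]
  rwa [he] at h

-- decomposition of the unit ball into p balls of radius 1/p
lemma unit_ball_decomp :
    {v : ℚ_[p] | ‖v‖ ≤ 1} = ⋃ j ∈ Finset.range p, {v : ℚ_[p] | ‖v - (j:ℚ_[p])‖ ≤ (p:ℝ)⁻¹} := by
  have hp : p.Prime := Fact.out
  ext v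
  simp only [Set.mem_setOf_eq, Set.mem_iUnion, Finset.mem_range]
  constructor
  · intro hv
    set y : ℤ_[p] := ⟨v, hv⟩ with hy
    refine ⟨y.appr 1, by simpa using y.appr_lt 1, ?_⟩
    have hs := PadicInt.appr_spec 1 y
    rw [← PadicInt.norm_le_pow_iff_mem_span_pow] at hs
    rw [PadicInt.norm_def] at hs
    have hc : ((y - (y.appr 1 : ℤ_[p]) : ℤ_[p]) : ℚ_[p]) = v - (y.appr 1 : ℚ_[p]) := by
      push_cast [hy]
      exact rfl
    rw [hc] at hs
    simpa using hs
  · rintro ⟨j, hj, hvj⟩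
    have h1 : ‖((j:ℤ) : ℚ_[p])‖ ≤ 1 := Padic.norm_int_le_one _
    have : v = (v - j) + (j : ℚ_[p]) := by ring
    rw [this]
    refine (Padic.nonarchimedean _ _).trans (max_le ?_ (by simpa using h1))
    refine hvj.trans ?_
    rw [inv_le_one_iff₀]
    right; exact_mod_cast hp.one_lt.le

lemma big_ball_decomp :
    {v : ℚ_[p] | ‖v‖ ≤ (p:ℝ)} = ⋃ j ∈ Finset.range p,
      {v : ℚ_[p] | ‖v - (j:ℚ_[p]) * (p:ℚ_[p])⁻¹‖ ≤ 1} := by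
  have hp : p.Prime := Fact.out
  have hppos : (0:ℝ) < p := by exact_mod_cast hp.pos
  have hpQ : (p:ℚ_[p]) ≠ 0 := by exact_mod_cast hp.ne_zero
  have hpinv : ‖(p:ℚ_[p])⁻¹‖ = (p:ℝ) := by
    rw [norm_inv, Padic.norm_p, inv_inv]
  ext v
  simp only [Set.mem_setOf_eq, Set.mem_iUnion, Finset.mem_range]
  constructor
  · intro hv
    have hw : ‖v * (p:ℚ_[p])‖ ≤ 1 := by
      rw [norm_mul, Padic.norm_p]
      calc ‖v‖ * (p:ℝ)⁻¹ ≤ (p:ℝ) * (p:ℝ)⁻¹ := by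
            exact mul_le_mul_of_nonneg_right hv (by positivity)
        _ = 1 := mul_inv_cancel₀ hppos.ne'
    set y : ℤ_[p] := ⟨v * (p:ℚ_[p]), hw⟩ with hy
    refine ⟨y.appr 1, by simpa using y.appr_lt 1, ?_⟩
    have hs := PadicInt.appr_spec 1 y
    rw [← PadicInt.norm_le_pow_iff_mem_span_pow, PadicInt.norm_def] at hs
    have hc : v - (y.appr 1 : ℚ_[p]) * (p:ℚ_[p])⁻¹
        = ((y - (y.appr 1 : ℤ_[p]) : ℤ_[p]) : ℚ_[p]) * (p:ℚ_[p])⁻¹ := by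
      push_cast [hy]
      field_simp
      exact rfl
    rw [hc, norm_mul, hpinv]
    calc ‖((y - (y.appr 1 : ℤ_[p]) : ℤ_[p]) : ℚ_[p])‖ * (p:ℝ)
        ≤ (p:ℝ)^(-1:ℤ) * (p:ℝ) := by
          exact mul_le_mul_of_nonneg_right (by simpa using hs) hppos.le
      _ = 1 := by rw [zpow_neg_one]; exact inv_mul_cancel₀ hppos.ne'
  · rintro ⟨j, hj, hvj⟩
    have h1 : ‖((j:ℤ) : ℚ_[p])‖ ≤ 1 := Padic.norm_int_le_one _
    have : v = (v - (j:ℚ_[p]) * (p:ℚ_[p])⁻¹) + (j:ℚ_[p]) * (p:ℚ_[p])⁻¹ := by ring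
    rw [this]
    refine (Padic.nonarchimedean _ _).trans (max_le ?_ ?_)
    · exact hvj.trans (by exact_mod_cast hp.one_lt.le)
    · rw [norm_mul, hpinv]
      calc ‖(j:ℚ_[p])‖ * (p:ℝ) ≤ 1 * (p:ℝ) :=
            mul_le_mul_of_nonneg_right (by simpa using h1) hppos.le
        _ = (p:ℝ) := one_mul _

lemma pairwise_small : (↑(Finset.range p) : Set ℕ).PairwiseDisjoint
    (fun j : ℕ => {v : ℚ_[p] | ‖v - (j:ℚ_[p])‖ ≤ (p:ℝ)⁻¹}) := by
  have hp : p.Prime := Fact.out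
  intro i hi j hj hij
  simp only [Finset.coe_range, Set.mem_Iio] at hi hj
  simp only [Function.onFun]
  rw [Set.disjoint_left]
  intro v hvi hvj
  simp only [Set.mem_setOf_eq] at hvi hvj
  have hd : ‖((i:ℤ) - (j:ℤ) : ℚ_[p])‖ < 1 := by
    have : ((i:ℤ) - (j:ℤ) : ℚ_[p]) = (v - (j:ℚ_[p])) - (v - (i:ℚ_[p])) := by push_cast; ring
    rw [this]
    have := Padic.nonarchimedean (v - (j:ℚ_[p])) (-(v - (i:ℚ_[p])))
    simp only [← sub_eq_add_neg] at this
    refine this.trans_lt ?_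
    rw [norm_neg]
    have h1 : (p:ℝ)⁻¹ < 1 := by
      rw [inv_lt_one_iff₀]; right; exact_mod_cast hp.one_lt
    exact max_lt (hvj.trans_lt h1) (hvi.trans_lt h1)
  have hc : ((i:ℤ) - (j:ℤ) : ℚ_[p]) = (((i:ℤ) - (j:ℤ) : ℤ) : ℚ_[p]) := by push_cast; ring
  rw [hc, Padic.norm_intCast_lt_one_iff] at hd
  have := Int.eq_zero_of_dvd_of_natAbs_lt_natAbs hd (by omega)
  omega

lemma pairwise_big : (↑(Finset.range p) : Set ℕ).PairwiseDisjoint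
    (fun j : ℕ => {v : ℚ_[p] | ‖v - (j:ℚ_[p]) * (p:ℚ_[p])⁻¹‖ ≤ 1}) := by
  have hp : p.Prime := Fact.out
  have hppos : (0:ℝ) < p := by exact_mod_cast hp.pos
  intro i hi j hj hij
  simp only [Finset.coe_range, Set.mem_Iio] at hi hj
  simp only [Function.onFun]
  rw [Set.disjoint_left]
  intro v hvi hvj
  simp only [Set.mem_setOf_eq] at hvi hvj
  have hd : ‖(i:ℚ_[p]) * (p:ℚ_[p])⁻¹ - (j:ℚ_[p]) * (p:ℚ_[p])⁻¹‖ ≤ 1 := by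
    have : (i:ℚ_[p]) * (p:ℚ_[p])⁻¹ - (j:ℚ_[p]) * (p:ℚ_[p])⁻¹
        = (v - (j:ℚ_[p]) * (p:ℚ_[p])⁻¹) - (v - (i:ℚ_[p]) * (p:ℚ_[p])⁻¹) := by ring
    rw [this]
    have := Padic.nonarchimedean (v - (j:ℚ_[p]) * (p:ℚ_[p])⁻¹)
      (-(v - (i:ℚ_[p]) * (p:ℚ_[p])⁻¹))
    simp only [← sub_eq_add_neg] at this
    refine this.trans (max_le hvj ?_)
    rw [norm_neg]; exact hvi
  have hne : ((i:ℤ) - (j:ℤ) : ℚ_[p]) ≠ 0 := by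
    have : ((i:ℤ) - (j:ℤ) : ℚ_[p]) = (((i:ℤ) - (j:ℤ) : ℤ) : ℚ_[p]) := by push_cast; ring
    rw [this]
    simp only [ne_eq, Int.cast_eq_zero]
    omega
  have hone : ‖((i:ℤ) - (j:ℤ) : ℚ_[p])‖ = 1 := by
    have h1 : ((i:ℤ) - (j:ℤ) : ℚ_[p]) = (((i:ℤ) - (j:ℤ) : ℤ) : ℚ_[p]) := by push_cast; ring
    rw [h1]
    rcases lt_or_eq_of_le (Padic.norm_int_le_one (p := p) ((i:ℤ) - (j:ℤ))) with h | h
    · exfalso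
      rw [Padic.norm_intCast_lt_one_iff] at h
      have := Int.eq_zero_of_dvd_of_natAbs_lt_natAbs h (by omega)
      omega
    · exact h
  have heq : (i:ℚ_[p]) * (p:ℚ_[p])⁻¹ - (j:ℚ_[p]) * (p:ℚ_[p])⁻¹
      = ((i:ℤ) - (j:ℤ) : ℚ_[p]) * (p:ℚ_[p])⁻¹ := by push_cast; ring
  rw [heq, norm_mul, hone, one_mul, norm_inv, Padic.norm_p, inv_inv] at hd
  exact absurd hd (by exact_mod_cast hp.one_lt.not_ge)

lemma measure_small_ball (μ : Measure ℚ_[p])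
    (hinv : ∀ (a : ℚ_[p]) (s : Set ℚ_[p]), μ ((a + ·) ⁻¹' s) = μ s)
    (hnorm : μ {x : ℚ_[p] | ‖x‖ ≤ 1} = 1) :
    μ {v : ℚ_[p] | ‖v‖ ≤ (p:ℝ)⁻¹} = (p:ℝ≥0∞)⁻¹ := by
  have hp : p.Prime := Fact.out
  have key : (1:ℝ≥0∞) = ∑ j ∈ Finset.range p, μ {v : ℚ_[p] | ‖v - (j:ℚ_[p])‖ ≤ (p:ℝ)⁻¹} := by
    rw [← hnorm, unit_ball_decomp,
      measure_biUnion_finset pairwise_small (fun j _ => meas_ball _ _)]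
  have each : ∀ j ∈ Finset.range p, μ {v : ℚ_[p] | ‖v - (j:ℚ_[p])‖ ≤ (p:ℝ)⁻¹}
      = μ {v : ℚ_[p] | ‖v‖ ≤ (p:ℝ)⁻¹} := fun j _ => measure_shift μ hinv _ _
  rw [Finset.sum_congr rfl each, Finset.sum_const, Finset.card_range, nsmul_eq_mul] at key
  have hp0 : (p:ℝ≥0∞) ≠ 0 := by exact_mod_cast hp.ne_zero
  have hpt : (p:ℝ≥0∞) ≠ ⊤ := ENNReal.natCast_ne_top p
  calc μ {v : ℚ_[p] | ‖v‖ ≤ (p:ℝ)⁻¹}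
      = (p:ℝ≥0∞)⁻¹ * ((p:ℝ≥0∞) * μ {v : ℚ_[p] | ‖v‖ ≤ (p:ℝ)⁻¹}) := by
        rw [← mul_assoc, ENNReal.inv_mul_cancel hp0 hpt, one_mul]
    _ = (p:ℝ≥0∞)⁻¹ := by rw [← key, mul_one]

lemma measure_big_ball (μ : Measure ℚ_[p])
    (hinv : ∀ (a : ℚ_[p]) (s : Set ℚ_[p]), μ ((a + ·) ⁻¹' s) = μ s)
    (hnorm : μ {x : ℚ_[p] | ‖x‖ ≤ 1} = 1) :
    μ {v : ℚ_[p] | ‖v‖ ≤ (p:ℝ)} = (p:ℝ≥0∞) := by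
  have key : μ {v : ℚ_[p] | ‖v‖ ≤ (p:ℝ)}
      = ∑ j ∈ Finset.range p, μ {v : ℚ_[p] | ‖v - (j:ℚ_[p]) * (p:ℚ_[p])⁻¹‖ ≤ 1} := by
    rw [big_ball_decomp, measure_biUnion_finset pairwise_big (fun j _ => meas_ball _ _)]
  have each : ∀ j ∈ Finset.range p, μ {v : ℚ_[p] | ‖v - (j:ℚ_[p]) * (p:ℚ_[p])⁻¹‖ ≤ 1}
      = (1:ℝ≥0∞) := by
    intro j _
    rw [measure_shift μ hinv]
    convert hnorm using 2
  rw [key, Finset.sum_congr rfl each, Finset.sum_const, Finset.card_range, nsmul_eq_mul, mul_one]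

lemma norm_two_eq_one (hodd : p ≠ 2) : ‖(2:ℚ_[p])‖ = 1 := by
  have hp : p.Prime := Fact.out
  have hc : ((2:ℤ) : ℚ_[p]) = (2:ℚ_[p]) := by push_cast; ring
  rw [← hc]
  rcases lt_or_eq_of_le (Padic.norm_int_le_one (p := p) 2) with h | h
  · exfalso
    rw [Padic.norm_intCast_lt_one_iff] at h
    have h2 : (p:ℤ) ≤ 2 := Int.le_of_dvd (by norm_num) h
    have h3 : 2 ≤ p := hp.two_le
    have : p = 2 := by omega
    exact hodd this
  · exact h

lemma norm_jump (t : ℚ_[p]) (ht : t ≠ 0) (k : ℤ) (h : ¬ ‖t‖ ≤ (p:ℝ)^k) :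
    (p:ℝ)^(k+1) ≤ ‖t‖ := by
  have hp1 : (1:ℝ) < p := by exact_mod_cast (Fact.out : p.Prime).one_lt
  rw [Padic.norm_eq_zpow_neg_valuation ht] at h ⊢
  rw [not_le] at h
  have hk : k < -t.valuation := by
    by_contra hcon
    rw [not_lt] at hcon
    exact absurd (zpow_le_zpow_right₀ hp1.le hcon) (not_le.mpr h)
  exact zpow_le_zpow_right₀ hp1.le (by omega)

lemma meas_ball0 (r : ℝ) : MeasurableSet {w : ℚ_[p] | ‖w‖ ≤ r} :=
  (isClosed_le continuous_norm continuous_const).measurableSet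

lemma integral_shift (μ : Measure ℚ_[p])
    (hinv : ∀ (a : ℚ_[p]) (s : Set ℚ_[p]), μ ((a + ·) ⁻¹' s) = μ s)
    (c : ℚ_[p]) (f : ℚ_[p] → ℂ) : ∫ v, f (c + v) ∂μ = ∫ v, f v ∂μ := by
  have hmap : μ.map (Homeomorph.addLeft c).toMeasurableEquiv = μ := by
    apply Measure.ext
    intro s hs
    rw [MeasurableEquiv.map_apply]
    exact hinv c s
  conv_rhs => rw [← hmap]
  rw [MeasureTheory.integral_map_equiv]
  rfl

section PsiInt
variable (ψ : ℚ_[p] → ℂ)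
  (hψ : ∀ (x : ℚ_[p]) (r : ℚ), (∃ (m : ℤ) (n : ℕ), r = m / p ^ n) →
      ‖x - (r : ℚ_[p])‖ ≤ 1 → ψ x = Complex.exp (-(2 * Real.pi * Complex.I * r)))

include hψ in
lemma J_zero (μ : Measure ℚ_[p])
    (hinv : ∀ (a : ℚ_[p]) (s : Set ℚ_[p]), μ ((a + ·) ⁻¹' s) = μ s)
    (c : ℚ_[p]) (ρ : ℝ) (v₀ : ℚ_[p]) (hv₀ : ‖v₀‖ ≤ ρ) (hne : ψ (c * v₀) ≠ 1) :
    ∫ v, ({v : ℚ_[p] | ‖v‖ ≤ ρ}).indicator (fun v => ψ (c * v)) v ∂μ = 0 := by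
  set F := fun v => ({v : ℚ_[p] | ‖v‖ ≤ ρ}).indicator (fun v => ψ (c * v)) v with hF
  set J := ∫ v, F v ∂μ with hJ
  have hpt : ∀ v, F (v₀ + v) = ψ (c * v₀) * F v := by
    intro v
    by_cases h : ‖v‖ ≤ ρ
    · have h' : ‖v₀ + v‖ ≤ ρ := (Padic.nonarchimedean _ _).trans (max_le hv₀ h)
      have hc : c * (v₀ + v) = c * v₀ + c * v := by ring
      simp only [hF, Set.indicator_apply, Set.mem_setOf_eq, h, h', if_true]
      rw [hc, psi_add ψ hψ]
    · have h' : ¬ ‖v₀ + v‖ ≤ ρ := by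
        intro hcon
        apply h
        have hv : v = (v₀ + v) + (-v₀) := by ring
        rw [hv]
        refine (Padic.nonarchimedean _ _).trans (max_le hcon ?_)
        rwa [norm_neg]
      simp only [hF, Set.indicator_apply, Set.mem_setOf_eq, h, h', if_false, mul_zero]
  have h1 : J = ψ (c * v₀) * J := by
    conv_lhs => rw [hJ, ← integral_shift μ hinv v₀ F]
    calc ∫ v, F (v₀ + v) ∂μ = ∫ v, ψ (c * v₀) * F v ∂μ := by simp only [hpt]
      _ = ψ (c * v₀) * J := by rw [integral_const_mul, hJ]
  have h2 : (ψ (c * v₀) - 1) * J = 0 := by linear_combination -h1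
  rcases mul_eq_zero.mp h2 with h | h
  · exact absurd (sub_eq_zero.mp h) hne
  · exact h

include hψ in
lemma J_full (μ : Measure ℚ_[p]) (c : ℚ_[p]) (ρ : ℝ)
    (h : ∀ v : ℚ_[p], ‖v‖ ≤ ρ → ‖c * v‖ ≤ 1) :
    ∫ v, ({v : ℚ_[p] | ‖v‖ ≤ ρ}).indicator (fun v => ψ (c * v)) v ∂μ
      = ((μ {v : ℚ_[p] | ‖v‖ ≤ ρ}).toReal : ℂ) := by
  have hpt : (fun v => ({v : ℚ_[p] | ‖v‖ ≤ ρ}).indicator (fun v => ψ (c * v)) v)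
      = fun v => ({v : ℚ_[p] | ‖v‖ ≤ ρ}).indicator (fun _ => (1:ℂ)) v := by
    funext v
    by_cases hv : ‖v‖ ≤ ρ
    · simp only [Set.indicator_apply, Set.mem_setOf_eq, hv, if_true]
      exact psi_one ψ hψ _ (h v hv)
    · simp only [Set.indicator_apply, Set.mem_setOf_eq, hv, if_false]
  rw [hpt, integral_indicator_const (1:ℂ) (meas_ball0 ρ)]
  simp [Complex.real_smul]
  rfl

end PsiInt

/-- The double-integral computation of Lemma 9.6: the odd Weil representation
applied to a lower-triangular unipotent fixes the indicator of `z + pℤ_p`. -/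
theorem weil_rep_fixes_coset_indicator (hodd : p ≠ 2) (ψ : ℚ_[p] → ℂ)
    (hψ : ∀ (x : ℚ_[p]) (r : ℚ), (∃ (m : ℤ) (n : ℕ), r = m / p ^ n) →
      ‖x - (r : ℚ_[p])‖ ≤ 1 → ψ x = Complex.exp (-(2 * Real.pi * Complex.I * r)))
    (μ : Measure ℚ_[p])
    (hinv : ∀ (a : ℚ_[p]) (s : Set ℚ_[p]), μ ((a + ·) ⁻¹' s) = μ s)
    (hnorm : μ {x : ℚ_[p] | ‖x‖ ≤ 1} = 1)
    (τ : ℚ_[p]) (hτ : ‖τ‖ = 1)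
    (z a x : ℚ_[p]) (hx : ‖x‖ ≤ 1) :
    ∫ y : ℚ_[p], (∫ u : ℚ_[p],
        Set.indicator {w : ℚ_[p] | ‖w - z‖ ≤ (p : ℝ)⁻¹} (fun _ => (1 : ℂ)) u *
          ψ (τ * (x * y ^ 2 * p ^ 2 + 2 * u * y - 2 * a * y)) ∂μ) ∂μ =
      Set.indicator {w : ℚ_[p] | ‖w - z‖ ≤ (p : ℝ)⁻¹} (fun _ => (1 : ℂ)) a := by
  have hp : p.Prime := Fact.out
  have hppos : (0:ℝ) < p := by exact_mod_cast hp.pos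
  have hp1 : (1:ℝ) < p := by exact_mod_cast hp.one_lt
  have h2 : ‖(2:ℚ_[p])‖ = 1 := norm_two_eq_one hodd
  set S := {w : ℚ_[p] | ‖w - z‖ ≤ (p:ℝ)⁻¹} with hS
  set Bs := {v : ℚ_[p] | ‖v‖ ≤ (p:ℝ)⁻¹} with hBs
  set Bb := {v : ℚ_[p] | ‖v‖ ≤ (p:ℝ)} with hBb
  -- Step 1: the inner integral
  have inner : ∀ y : ℚ_[p],
      (∫ u : ℚ_[p], S.indicator (fun _ => (1:ℂ)) u *
          ψ (τ * (x * y ^ 2 * (p:ℚ_[p]) ^ 2 + 2 * u * y - 2 * a * y)) ∂μ)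
      = ψ (τ * (x * y ^ 2 * (p:ℚ_[p]) ^ 2 + 2 * z * y - 2 * a * y))
        * ∫ v, Bs.indicator (fun v => ψ (2 * τ * y * v)) v ∂μ := by
    intro y
    set A := τ * (x * y ^ 2 * (p:ℚ_[p]) ^ 2 + 2 * z * y - 2 * a * y) with hA
    set G := fun u : ℚ_[p] => S.indicator (fun _ => (1:ℂ)) u *
        ψ (τ * (x * y ^ 2 * (p:ℚ_[p]) ^ 2 + 2 * u * y - 2 * a * y)) with hG
    have hpt : ∀ v, G (z + v) = ψ A * Bs.indicator (fun v => ψ (2 * τ * y * v)) v := by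
      intro v
      have harg : τ * (x * y ^ 2 * (p:ℚ_[p]) ^ 2 + 2 * (z + v) * y - 2 * a * y)
          = A + 2 * τ * y * v := by rw [hA]; ring
      have hmem : (z + v ∈ S) ↔ (v ∈ Bs) := by
        simp only [hS, hBs, Set.mem_setOf_eq, add_sub_cancel_left]
      by_cases h : v ∈ Bs
      · have h' : z + v ∈ S := hmem.mpr h
        simp only [hG, Set.indicator_apply, h, h', if_true]
        rw [one_mul, harg, psi_add ψ hψ]
      · have h' : z + v ∉ S := fun hc => h (hmem.mp hc)
        simp only [hG, Set.indicator_apply, h, h', if_false, zero_mul, mul_zero]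
    calc (∫ u, G u ∂μ) = ∫ v, G (z + v) ∂μ := (integral_shift μ hinv z G).symm
      _ = ∫ v, ψ A * Bs.indicator (fun v => ψ (2 * τ * y * v)) v ∂μ := by simp only [hpt]
      _ = ψ A * ∫ v, Bs.indicator (fun v => ψ (2 * τ * y * v)) v ∂μ := integral_const_mul _ _
  -- Step 2: evaluate the inner integral
  have hval : ∀ y : ℚ_[p],
      ψ (τ * (x * y ^ 2 * (p:ℚ_[p]) ^ 2 + 2 * z * y - 2 * a * y))
        * (∫ v, Bs.indicator (fun v => ψ (2 * τ * y * v)) v ∂μ)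
      = Bb.indicator (fun y' => (((p:ℝ)⁻¹ : ℝ) : ℂ) * ψ (2 * τ * (z - a) * y')) y := by
    intro y
    by_cases hy : y ∈ Bb
    · have hyn : ‖y‖ ≤ (p:ℝ) := hy
      have hJ : (∫ v, Bs.indicator (fun v => ψ (2 * τ * y * v)) v ∂μ)
          = (((p:ℝ)⁻¹ : ℝ) : ℂ) := by
        have hbound : ∀ v : ℚ_[p], ‖v‖ ≤ (p:ℝ)⁻¹ → ‖2 * τ * y * v‖ ≤ 1 := by
          intro v hv
          have : ‖2 * τ * y * v‖ = ‖y‖ * ‖v‖ := by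
            rw [norm_mul, norm_mul, norm_mul, h2, hτ, one_mul, one_mul]
          rw [this]
          calc ‖y‖ * ‖v‖ ≤ (p:ℝ) * (p:ℝ)⁻¹ :=
                mul_le_mul hyn hv (norm_nonneg _) hppos.le
            _ = 1 := mul_inv_cancel₀ hppos.ne'
        rw [hBs, J_full ψ hψ μ (2*τ*y) ((p:ℝ)⁻¹) hbound,
          measure_small_ball μ hinv hnorm]
        norm_num
      have hsplit : τ * (x * y ^ 2 * (p:ℚ_[p]) ^ 2 + 2 * z * y - 2 * a * y)
          = τ * (x * y ^ 2 * (p:ℚ_[p]) ^ 2) + 2 * τ * (z - a) * y := by ring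
      have h1 : ψ (τ * (x * y ^ 2 * (p:ℚ_[p]) ^ 2)) = 1 := by
        apply psi_one ψ hψ
        have hnval : ‖τ * (x * y ^ 2 * (p:ℚ_[p]) ^ 2)‖
            = ‖x‖ * ‖y‖ ^ 2 * (p:ℝ) ^ (-2:ℤ) := by
          rw [norm_mul, hτ, one_mul, norm_mul, norm_mul, norm_pow,
            Padic.norm_p_pow 2]
          norm_num
        rw [hnval]
        have hy2 : ‖y‖ ^ 2 ≤ (p:ℝ) ^ 2 :=
          pow_le_pow_left₀ (norm_nonneg _) hyn 2
        have hz2 : (p:ℝ) ^ (-2:ℤ) = ((p:ℝ) ^ 2)⁻¹ := by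
          rw [zpow_neg]
          norm_cast
        rw [hz2]
        have hyy : ‖y‖ ^ 2 * ((p:ℝ) ^ 2)⁻¹ ≤ 1 := by
          rw [← div_eq_mul_inv, div_le_one (by positivity)]
          exact hy2
        have hassoc : ‖x‖ * ‖y‖ ^ 2 * ((p:ℝ) ^ 2)⁻¹
            = ‖x‖ * (‖y‖ ^ 2 * ((p:ℝ) ^ 2)⁻¹) := by ring
        rw [hassoc]
        calc ‖x‖ * (‖y‖ ^ 2 * ((p:ℝ) ^ 2)⁻¹) ≤ 1 * 1 :=
              mul_le_mul hx hyy (by positivity) zero_le_one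
          _ = 1 := one_mul 1
      rw [hJ, hsplit, psi_add ψ hψ, h1, one_mul, Set.indicator_of_mem hy]
      ring
    · have hyn : ¬ ‖y‖ ≤ (p:ℝ) := hy
      have hy0 : y ≠ 0 := by
        intro h; apply hyn; rw [h, norm_zero]; positivity
      have hybig : (p:ℝ) ^ 2 ≤ ‖y‖ := by
        have h := norm_jump y hy0 1 (by rwa [zpow_one])
        calc (p:ℝ) ^ 2 = (p:ℝ) ^ ((2:ℕ):ℤ) := (zpow_natCast _ 2).symm
          _ = (p:ℝ) ^ ((1:ℤ) + 1) := by norm_num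
          _ ≤ ‖y‖ := h
      have hτ0 : τ ≠ 0 := by intro h; rw [h, norm_zero] at hτ; norm_num at hτ
      have h20 : (2:ℚ_[p]) ≠ 0 := two_ne_zero
      have hc0 : 2 * τ * y ≠ 0 := by
        apply mul_ne_zero (mul_ne_zero h20 hτ0) hy0
      set v₀ := (2 * τ * y)⁻¹ * (p:ℚ_[p])⁻¹ with hv₀def
      have hcv₀ : 2 * τ * y * v₀ = (p:ℚ_[p])⁻¹ := by
        rw [hv₀def, ← mul_assoc, mul_inv_cancel₀ hc0, one_mul]
      have hnv₀ : ‖v₀‖ ≤ (p:ℝ)⁻¹ := by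
        have hne : ‖2 * τ * y‖ = ‖y‖ := by
          rw [norm_mul, norm_mul, h2, hτ, one_mul, one_mul]
        rw [hv₀def, norm_mul, norm_inv, hne, norm_inv, Padic.norm_p, inv_inv]
        have hy0' : (0:ℝ) < ‖y‖ := norm_pos_iff.mpr hy0
        have key : ‖y‖⁻¹ ≤ ((p:ℝ) ^ 2)⁻¹ := by
          apply inv_anti₀ (by positivity) hybig
        calc ‖y‖⁻¹ * (p:ℝ) ≤ ((p:ℝ) ^ 2)⁻¹ * (p:ℝ) :=
              mul_le_mul_of_nonneg_right key hppos.le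
          _ = (p:ℝ)⁻¹ := by
              rw [sq, mul_inv, mul_assoc, inv_mul_cancel₀ hppos.ne', mul_one]
      have hJ : (∫ v, Bs.indicator (fun v => ψ (2 * τ * y * v)) v ∂μ) = 0 := by
        rw [hBs]
        apply J_zero ψ hψ μ hinv (2*τ*y) ((p:ℝ)⁻¹) v₀ hnv₀
        rw [hcv₀]
        exact psi_pinv_ne_one ψ hψ
      rw [hJ, mul_zero, Set.indicator_of_notMem hy]
  -- Step 3: the outer integral
  have houter : (fun y : ℚ_[p] => ∫ u : ℚ_[p], S.indicator (fun _ => (1:ℂ)) u *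
          ψ (τ * (x * y ^ 2 * (p:ℚ_[p]) ^ 2 + 2 * u * y - 2 * a * y)) ∂μ)
      = fun y => Bb.indicator (fun y' => (((p:ℝ)⁻¹ : ℝ) : ℂ) * ψ (2 * τ * (z - a) * y')) y :=
    funext fun y => (inner y).trans (hval y)
  rw [houter]
  have hpull : (fun y => Bb.indicator (fun y' => (((p:ℝ)⁻¹ : ℝ) : ℂ) * ψ (2 * τ * (z - a) * y')) y)
      = fun y => (((p:ℝ)⁻¹ : ℝ) : ℂ) * Bb.indicator (fun y' => ψ (2 * τ * (z - a) * y')) y := by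
    funext y
    by_cases hy : y ∈ Bb
    · simp only [Set.indicator_of_mem hy]
    · simp only [Set.indicator_of_notMem hy, mul_zero]
  rw [hpull, integral_const_mul]
  by_cases hz : a ∈ S
  · have hza : ‖z - a‖ ≤ (p:ℝ)⁻¹ := by
      rw [norm_sub_rev]; exact hz
    have hbound : ∀ v : ℚ_[p], ‖v‖ ≤ (p:ℝ) → ‖2 * τ * (z - a) * v‖ ≤ 1 := by
      intro v hv
      have : ‖2 * τ * (z - a) * v‖ = ‖z - a‖ * ‖v‖ := by
        rw [norm_mul, norm_mul, norm_mul, h2, hτ, one_mul, one_mul]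
      rw [this]
      calc ‖z - a‖ * ‖v‖ ≤ (p:ℝ)⁻¹ * (p:ℝ) :=
            mul_le_mul hza hv (norm_nonneg _) (by positivity)
        _ = 1 := inv_mul_cancel₀ hppos.ne'
    rw [hBb, J_full ψ hψ μ (2*τ*(z-a)) ((p:ℝ)) hbound, measure_big_ball μ hinv hnorm,
      Set.indicator_of_mem hz]
    have : ((p:ℝ≥0∞)).toReal = (p:ℝ) := by simp
    rw [this]
    push_cast
    try field_simp
    exact div_self (by exact_mod_cast hp.ne_zero)
  · have hza : ¬ ‖z - a‖ ≤ (p:ℝ)⁻¹ := by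
      rw [norm_sub_rev]; exact hz
    have hza0 : z - a ≠ 0 := by
      intro h; apply hza; rw [h, norm_zero]; positivity
    have hzabig : (1:ℝ) ≤ ‖z - a‖ := by
      have := norm_jump (z - a) hza0 (-1) (by rwa [zpow_neg_one])
      simpa using this
    have hd0 : 2 * τ * (z - a) ≠ 0 := by
      have hτ0 : τ ≠ 0 := by intro h; rw [h, norm_zero] at hτ; norm_num at hτ
      exact mul_ne_zero (mul_ne_zero two_ne_zero hτ0) hza0
    set w₀ := (2 * τ * (z - a))⁻¹ * (p:ℚ_[p])⁻¹ with hw₀def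
    have hcw₀ : 2 * τ * (z - a) * w₀ = (p:ℚ_[p])⁻¹ := by
      rw [hw₀def, ← mul_assoc, mul_inv_cancel₀ hd0, one_mul]
    have hnw₀ : ‖w₀‖ ≤ (p:ℝ) := by
      have hne : ‖2 * τ * (z - a)‖ = ‖z - a‖ := by
        rw [norm_mul, norm_mul, h2, hτ, one_mul, one_mul]
      rw [hw₀def, norm_mul, norm_inv, hne, norm_inv, Padic.norm_p, inv_inv]
      calc ‖z - a‖⁻¹ * (p:ℝ) ≤ 1 * (p:ℝ) := by
            apply mul_le_mul_of_nonneg_right _ hppos.le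
            rw [inv_le_one_iff₀]; right; exact hzabig
        _ = (p:ℝ) := one_mul _
    have hJ : (∫ y, Bb.indicator (fun y' => ψ (2 * τ * (z - a) * y')) y ∂μ) = 0 := by
      rw [hBb]
      apply J_zero ψ hψ μ hinv (2*τ*(z-a)) ((p:ℝ)) w₀ hnw₀
      rw [hcw₀]
      exact psi_pinv_ne_one ψ hψ
    rw [hJ, mul_zero, Set.indicator_of_notMem hz]
end
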